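/- Let T be a partition of n and a ∈ ℕ such that T^a is a proper power of T (i.e., T^a ≠ T and T^a ≠ [1^n]). Then o(T^a) is a proper divisor of o(T) (i.e., o(T^a) divides o(T) and o(T^a) ∉ {1, o(T)}). -/

import Mathlib

def partitionPow (T : Multiset ℕ) (a : ℕ) : Multiset ℕ :=
  T.bind fun m => Multiset.replicate (Nat.gcd a m) (m / Nat.gcd a m)

lemma key_div (a m L : ℕ) (hm : m ∣ L) (h0 : 0 < m) :
    m / Nat.gcd a m ∣ L / Nat.gcd a L := by
  obtain ⟨k, hk⟩ := hm
  have hg : 0 < Nat.gcd a m := Nat.gcd_pos_of_pos_right a h0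
  have hGL : Nat.gcd a L ∣ L := Nat.gcd_dvd_right a L
  have h1 : m * Nat.gcd a L ∣ L * Nat.gcd a m := by
    rw [← Nat.gcd_mul_left L a m]
    refine Nat.dvd_gcd ?_ ?_
    · have h2 : m * Nat.gcd a L ∣ m * (k * a) :=
        mul_dvd_mul_left m ((Nat.gcd_dvd_left a L).mul_left k)
      rwa [← mul_assoc, ← hk] at h2
    · rw [mul_comm L m]
      exact mul_dvd_mul_left m hGL
  rw [Nat.dvd_div_iff_mul_dvd hGL]
  rw [← Nat.mul_dvd_mul_iff_right hg, mul_assoc,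
    Nat.div_mul_cancel (Nat.gcd_dvd_right a m), mul_comm (Nat.gcd a L) m]
  exact h1

lemma mem_pow {T : Multiset ℕ} {a b : ℕ} (hb : b ∈ partitionPow T a) :
    ∃ m ∈ T, b = m / Nat.gcd a m := by
  simp only [partitionPow, Multiset.mem_bind, Multiset.mem_replicate] at hb
  obtain ⟨m, hm, _, rfl⟩ := hb
  exact ⟨m, hm, rfl⟩

lemma lcm_ne_zero {T : Multiset ℕ} (hpos : ∀ m ∈ T, 1 ≤ m) : T.lcm ≠ 0 := by
  induction T using Multiset.induction with
  | empty => simp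
  | cons x s ih =>
    rw [Multiset.lcm_cons]
    have hx : x ≠ 0 := by have := hpos x (Multiset.mem_cons_self x s); omega
    exact Nat.lcm_ne_zero hx (ih fun m hm => hpos m (Multiset.mem_cons_of_mem hm))

theorem stmt_9 (n : ℕ) (T : Multiset ℕ) (hsum : T.sum = n)
    (hpos : ∀ m ∈ T, 1 ≤ m) (a : ℕ)
    (hne : partitionPow T a ≠ T)
    (hnt : partitionPow T a ≠ Multiset.replicate n 1) :
    (partitionPow T a).lcm ∣ T.lcm ∧ (partitionPow T a).lcm ≠ 1 ∧
      (partitionPow T a).lcm ≠ T.lcm := by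
  have hL0 : T.lcm ≠ 0 := lcm_ne_zero hpos
  -- divisibility
  have hdvd : (partitionPow T a).lcm ∣ T.lcm := by
    apply Multiset.lcm_dvd.2
    intro b hb
    obtain ⟨m, hm, rfl⟩ := mem_pow hb
    exact (Nat.div_dvd_of_dvd (Nat.gcd_dvd_right a m)).trans (Multiset.dvd_lcm hm)
  refine ⟨hdvd, ?_, ?_⟩
  · -- lcm ≠ 1
    intro h1
    apply hnt
    rw [Multiset.eq_replicate]
    constructor
    · rw [partitionPow, Multiset.card_bind]
      simp only [Function.comp_def, Multiset.card_replicate]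
      have : T.map (fun m => Nat.gcd a m) = T.map id := by
        apply Multiset.map_congr rfl
        intro m hm
        simp only [id]
        -- show gcd a m = m, using that m / gcd a m = 1
        have hmp := hpos m hm
        have hg : 0 < Nat.gcd a m := Nat.gcd_pos_of_pos_right a (by omega)
        have hmem : m / Nat.gcd a m ∈ partitionPow T a := by
          simp only [partitionPow, Multiset.mem_bind]
          exact ⟨m, hm, Multiset.mem_replicate.2 ⟨by omega, rfl⟩⟩
        have hd1 : m / Nat.gcd a m ∣ 1 := h1 ▸ Multiset.dvd_lcm hmem
        have heq1 : m / Nat.gcd a m = 1 := Nat.dvd_one.1 hd1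
        have := Nat.div_mul_cancel (Nat.gcd_dvd_right a m)
        rw [heq1, one_mul] at this
        exact this
      rw [this, Multiset.map_id, hsum]
    · intro b hb
      obtain ⟨m, hm, rfl⟩ := mem_pow hb
      have hmem : m / Nat.gcd a m ∈ partitionPow T a := by
        have hmp := hpos m hm
        simp only [partitionPow, Multiset.mem_bind]
        exact ⟨m, hm, Multiset.mem_replicate.2
          ⟨by have := Nat.gcd_pos_of_pos_right a (show 0 < m by omega); omega, rfl⟩⟩
      exact Nat.dvd_one.1 (h1 ▸ Multiset.dvd_lcm hmem)
  · -- lcm ≠ T.lcm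
    intro hEq
    -- first: lcm (T^a) ∣ T.lcm / gcd a T.lcm
    have hdvd2 : (partitionPow T a).lcm ∣ T.lcm / Nat.gcd a T.lcm := by
      apply Multiset.lcm_dvd.2
      intro b hb
      obtain ⟨m, hm, rfl⟩ := mem_pow hb
      exact key_div a m T.lcm (Multiset.dvd_lcm hm)
        (by have := hpos m hm; omega)
    rw [hEq] at hdvd2
    have hGL : Nat.gcd a T.lcm ∣ T.lcm := Nat.gcd_dvd_right a T.lcm
    have hdvd3 : T.lcm / Nat.gcd a T.lcm ∣ T.lcm := Nat.div_dvd_of_dvd hGL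
    have hG1 : Nat.gcd a T.lcm = 1 := by
      have heq : T.lcm / Nat.gcd a T.lcm = T.lcm := Nat.dvd_antisymm hdvd3 hdvd2
      have hGpos : 0 < Nat.gcd a T.lcm := Nat.gcd_pos_of_pos_right a (Nat.pos_of_ne_zero hL0)
      rcases Nat.div_eq_self.1 heq with h | h
      · exact absurd h hL0
      · exact h
    -- then gcd a m = 1 for all m ∈ T, so partitionPow T a = T
    apply hne
    have : partitionPow T a = T.bind fun m => {m} := by
      unfold partitionPow
      apply Multiset.bind_congr
      intro m hm
      have hg1 : Nat.gcd a m = 1 := Nat.eq_one_of_dvd_one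
        (hG1 ▸ Nat.dvd_gcd (Nat.gcd_dvd_left a m)
          ((Nat.gcd_dvd_right a m).trans (Multiset.dvd_lcm hm)))
      simp [hg1]
    rw [this]
    simpa using Multiset.bind_singleton T id
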